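/- arXiv:2206.08111 — 4 statements merged into one kernel-verified Lean document; each statement's English description precedes it below -/
import Mathlib

section
/- If Z follows the generalized Gaussian distribution on ℝ^d with density proportional to exp(−‖z‖_+²/(2σ_+²)) for a norm ‖·‖_+, then ‖Z‖_+² follows a Gamma distribution with shape d/2 and scale 2σ_+²; in particular E[‖Z‖_+²] = σ_+² d. -/
open MeasureTheory ProbabilityTheory
open scoped ENNReal NNReal Pointwise

theorem generalized_gaussian_norm_sq_gamma
    (d : ℕ) (hd : 0 < d) (σ : ℝ) (hσ : 0 < σ)
    (N : EuclideanSpace ℝ (Fin d) → ℝ)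
    (hN_add : ∀ x y, N (x + y) ≤ N x + N y)
    (hN_smul : ∀ (r : ℝ) x, N (r • x) = |r| * N x)
    (hN_eq : ∀ x, N x = 0 → x = 0)
    (hN_cont : Continuous N)
    (c : ℝ) (hc : 0 < c)
    (μ : Measure (EuclideanSpace ℝ (Fin d)))
    (hμ : μ = volume.withDensity
      (fun z => ENNReal.ofReal (c * Real.exp (-(N z) ^ 2 / (2 * σ ^ 2)))))
    (hprob : IsProbabilityMeasure μ) :
    μ.map (fun z => (N z) ^ 2) = gammaMeasure ((d : ℝ) / 2) (1 / (2 * σ ^ 2)) ∧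
      ∫ z, (N z) ^ 2 ∂μ = σ ^ 2 * d := by
  classical
  have hdpos : (0 : ℝ) < d := by exact_mod_cast hd
  set a : ℝ := (d : ℝ) / 2 with ha
  have hapos : 0 < a := by positivity
  set r : ℝ := 1 / (2 * σ ^ 2) with hr
  have hrpos : 0 < r := by positivity
  have hNmeas : Measurable N := hN_cont.measurable
  set T : EuclideanSpace ℝ (Fin d) → ℝ := fun z => (N z) ^ 2 with hTdef
  have hTmeas : Measurable T := hNmeas.pow_const 2
  have hN0 : N 0 = 0 := by
    have := hN_smul 0 0
    simpa using this
  have hNnonneg : ∀ x, 0 ≤ N x := by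
    intro x
    have h1 : N (-x) = N x := by
      have := hN_smul (-1) x
      simpa using this
    have h2 : (0 : ℝ) ≤ N x + N (-x) := by
      have := hN_add x (-x)
      rwa [add_neg_cancel, hN0] at this
    rw [h1] at h2
    linarith
  haveI : Nontrivial (EuclideanSpace ℝ (Fin d)) := by
    refine ⟨EuclideanSpace.single ⟨0, hd⟩ 1, 0, ?_⟩
    intro h
    have := congrArg (fun v => v ⟨0, hd⟩) h
    simp [EuclideanSpace.single_apply] at this
  -- lower bound for N by the Euclidean norm
  obtain ⟨x₀, hx₀mem, hx₀min⟩ :=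
    (isCompact_sphere (0 : EuclideanSpace ℝ (Fin d)) 1).exists_isMinOn
      (NormedSpace.sphere_nonempty.mpr zero_le_one) hN_cont.continuousOn
  set m : ℝ := N x₀ with hm
  have hmpos : 0 < m := by
    rcases lt_or_eq_of_le (hNnonneg x₀) with h | h
    · exact h
    · exfalso
      have hx0 : x₀ = 0 := hN_eq _ h.symm
      have hn : ‖x₀‖ = 1 := mem_sphere_zero_iff_norm.mp hx₀mem
      rw [hx0] at hn
      simp at hn
  have hlow : ∀ x, m * ‖x‖ ≤ N x := by
    intro x
    rcases eq_or_ne x 0 with rfl | hx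
    · simp [hN0]
    · have hxn : ‖x‖ ≠ 0 := norm_ne_zero_iff.mpr hx
      have hxpos : (0 : ℝ) < ‖x‖ := norm_pos_iff.mpr hx
      have hmem : (‖x‖⁻¹ • x) ∈ Metric.sphere (0 : EuclideanSpace ℝ (Fin d)) 1 := by
        simp [norm_smul, abs_of_nonneg (inv_nonneg.mpr (norm_nonneg x)),
          inv_mul_cancel₀ hxn]
      have hmin := (isMinOn_iff.mp hx₀min) _ hmem
      rw [hN_smul, abs_of_nonneg (inv_nonneg.mpr (norm_nonneg x))] at hmin
      calc m * ‖x‖ ≤ (‖x‖⁻¹ * N x) * ‖x‖ := by nlinarith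
        _ = N x := by field_simp
  set S1 : Set (EuclideanSpace ℝ (Fin d)) := {z | N z ≤ 1} with hS1
  set V : ℝ≥0∞ := volume S1 with hV
  have hVpos : 0 < V := by
    have hopen : IsOpen {z : EuclideanSpace ℝ (Fin d) | N z < 1} :=
      isOpen_lt hN_cont continuous_const
    have h0 : (0 : EuclideanSpace ℝ (Fin d)) ∈ {z : EuclideanSpace ℝ (Fin d) | N z < 1} := by
      simp [hN0]
    calc (0 : ℝ≥0∞) < volume {z : EuclideanSpace ℝ (Fin d) | N z < 1} :=
          hopen.measure_pos volume ⟨0, h0⟩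
      _ ≤ V := measure_mono (by rw [hS1]; exact fun z hz => show N z ≤ 1 from le_of_lt hz)
  have hVfin : V < ∞ := by
    have hsub : S1 ⊆ Metric.closedBall 0 m⁻¹ := by
      intro z hz
      rw [Metric.mem_closedBall, dist_zero_right]
      have h1 : m * ‖z‖ ≤ 1 := le_trans (hlow z) hz
      nlinarith [mul_inv_cancel₀ hmpos.ne', norm_nonneg z]
    exact lt_of_le_of_lt (measure_mono hsub) measure_closedBall_lt_top
  -- scaling of sublevel sets
  have hscale : ∀ s : ℝ, 0 ≤ s →
      volume {z : EuclideanSpace ℝ (Fin d) | N z ≤ s} = ENNReal.ofReal (s ^ d) * V := by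
    intro s hs
    rcases eq_or_lt_of_le hs with rfl | hs'
    · have hset : {z : EuclideanSpace ℝ (Fin d) | N z ≤ (0:ℝ)} = {0} := by
        ext z
        simp only [Set.mem_setOf_eq, Set.mem_singleton_iff]
        constructor
        · intro h; exact hN_eq z (le_antisymm h (hNnonneg z))
        · rintro rfl; simp [hN0]
      rw [hset, measure_singleton, zero_pow hd.ne', ENNReal.ofReal_zero, zero_mul]
    · have hset : {z : EuclideanSpace ℝ (Fin d) | N z ≤ s} = s • S1 := by
        ext z
        rw [Set.mem_smul_set_iff_inv_smul_mem₀ hs'.ne']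
        simp only [hS1, Set.mem_setOf_eq, hN_smul, abs_inv, abs_of_pos hs']
        rw [inv_mul_eq_div, div_le_one hs']
      rw [hset, Measure.addHaar_smul_of_nonneg volume hs'.le, finrank_euclideanSpace_fin]
  set ρ : Measure ℝ := volume.map T with hρ
  have hρIic : ∀ x : ℝ, 0 ≤ x → ρ (Set.Iic x) = ENNReal.ofReal (x ^ a) * V := by
    intro x hx
    rw [hρ, Measure.map_apply hTmeas measurableSet_Iic]
    have hpre : T ⁻¹' Set.Iic x = {z : EuclideanSpace ℝ (Fin d) | N z ≤ Real.sqrt x} := by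
      ext z
      simp only [Set.mem_preimage, Set.mem_Iic, Set.mem_setOf_eq, hTdef]
      rw [← Real.le_sqrt (hNnonneg z) hx]
    rw [hpre, hscale _ (Real.sqrt_nonneg x)]
    congr 2
    rw [← Real.rpow_natCast (Real.sqrt x) d, Real.sqrt_eq_rpow, ← Real.rpow_mul hx]
    congr 1
    rw [ha]; ring
  have hρIic0 : ρ (Set.Iic 0) = 0 := by
    rw [hρIic 0 le_rfl, Real.zero_rpow hapos.ne', ENNReal.ofReal_zero, zero_mul]
  have hρfin : ∀ x : ℝ, ρ (Set.Iic x) < ∞ := by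
    intro x
    rcases le_or_gt x 0 with hx | hx
    · calc ρ (Set.Iic x) ≤ ρ (Set.Iic 0) := measure_mono (Set.Iic_subset_Iic.mpr hx)
        _ = 0 := hρIic0
        _ < ∞ := by simp
    · rw [hρIic x hx.le]
      exact ENNReal.mul_lt_top ENNReal.ofReal_lt_top hVfin
  -- density of ρ
  set hdens : ℝ → ℝ≥0∞ :=
    fun t => Set.indicator (Set.Ioi 0) (fun t => V * ENNReal.ofReal (a * t ^ (a - 1))) t
    with hhd
  have hdens_meas : Measurable hdens := by
    apply Measurable.indicator _ measurableSet_Ioi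
    fun_prop
  have hdens_zero : ∀ t : ℝ, t ≤ 0 → hdens t = 0 := by
    intro t ht
    rw [hhd]
    exact Set.indicator_of_notMem (by simpa using ht) _
  have hρeq : ρ = volume.withDensity hdens := by
    refine Measure.ext_of_Ioc' ρ _ (fun p q hpq => ?_) (fun p q hpq => ?_)
    · exact (lt_of_le_of_lt (measure_mono Set.Ioc_subset_Iic_self) (hρfin q)).ne
    · rw [withDensity_apply _ measurableSet_Ioc]
      rw [hhd, lintegral_indicator measurableSet_Ioi, Measure.restrict_restrict measurableSet_Ioi]
      rcases le_or_gt q 0 with hq | hq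
      · have he : Set.Ioi (0:ℝ) ∩ Set.Ioc p q = ∅ := by
          ext t
          simp only [Set.mem_inter_iff, Set.mem_Ioi, Set.mem_Ioc, Set.mem_empty_iff_false,
            iff_false]
          rintro ⟨h1, _, h3⟩
          linarith
        rw [he]
        have : ρ (Set.Ioc p q) = 0 := by
          refine le_antisymm ?_ zero_le
          calc ρ (Set.Ioc p q) ≤ ρ (Set.Iic 0) :=
                measure_mono (fun t ht => le_trans ht.2 hq)
            _ = 0 := hρIic0
        simp [this]
      · set p' : ℝ := max p 0 with hp'
        have hp'0 : 0 ≤ p' := le_max_right _ _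
        have hp'q : p' < q := max_lt hpq hq
        have hinter : Set.Ioi (0:ℝ) ∩ Set.Ioc p q = Set.Ioc p' q := by
          ext t
          simp only [Set.mem_inter_iff, Set.mem_Ioi, Set.mem_Ioc, hp', max_lt_iff]
          tauto
        have hρIoc : ρ (Set.Ioc p q) =
            ENNReal.ofReal (q ^ a) * V - ENNReal.ofReal (p' ^ a) * V := by
          have h1 : ρ (Set.Ioc p q) = ρ (Set.Ioc p' q) := by
            refine le_antisymm ?_ (measure_mono (Set.Ioc_subset_Ioc_left (le_max_left _ _)))
            have hsub : Set.Ioc p q ⊆ Set.Ioc p' q ∪ Set.Iic 0 := by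
              intro t ht
              rcases le_or_gt t 0 with h | h
              · exact Or.inr h
              · exact Or.inl ⟨by rw [hp']; exact max_lt_iff.mpr ⟨ht.1, h⟩, ht.2⟩
            calc ρ (Set.Ioc p q) ≤ ρ (Set.Ioc p' q ∪ Set.Iic 0) := measure_mono hsub
              _ ≤ ρ (Set.Ioc p' q) + ρ (Set.Iic 0) := measure_union_le _ _
              _ = ρ (Set.Ioc p' q) := by rw [hρIic0, add_zero]
          rw [h1, ← Set.Iic_sdiff_Iic,
            measure_diff (Set.Iic_subset_Iic.mpr hp'q.le)
              measurableSet_Iic.nullMeasurableSet (hρfin p').ne,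
            hρIic q (hp'0.trans hp'q.le), hρIic p' hp'0]
        rw [hρIoc, hinter]
        have hfun : ∀ t ∈ Set.Ioc p' q,
            V * ENNReal.ofReal (a * t ^ (a - 1)) = V * ENNReal.ofReal (a * t ^ (a - 1)) :=
          fun _ _ => rfl
        rw [lintegral_const_mul _
          (by fun_prop : Measurable fun t : ℝ => ENNReal.ofReal (a * t ^ (a - 1)))]
        have hint : IntegrableOn (fun t : ℝ => a * t ^ (a - 1)) (Set.Ioc p' q) volume := by
          have := (intervalIntegral.intervalIntegrable_rpow'
            (a := p') (b := q) (by linarith : (-1:ℝ) < a - 1)).const_mul a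
          rwa [intervalIntegrable_iff_integrableOn_Ioc_of_le hp'q.le] at this
        have hnn : 0 ≤ᵐ[volume.restrict (Set.Ioc p' q)] fun t : ℝ => a * t ^ (a - 1) := by
          refine (ae_restrict_iff' measurableSet_Ioc).mpr (ae_of_all _ fun t ht => ?_)
          have ht0 : 0 ≤ t := hp'0.trans ht.1.le
          exact mul_nonneg hapos.le (Real.rpow_nonneg ht0 _)
        rw [← ofReal_integral_eq_lintegral_ofReal hint hnn]
        have hreal : ∫ t in Set.Ioc p' q, a * t ^ (a - 1) = q ^ a - p' ^ a := by
          rw [← intervalIntegral.integral_of_le hp'q.le]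
          rw [intervalIntegral.integral_const_mul]
          rw [integral_rpow (Or.inl (by linarith : (-1:ℝ) < a - 1))]
          rw [sub_add_cancel]
          field_simp
        rw [hreal, ENNReal.ofReal_sub _ (Real.rpow_nonneg hp'0 _),
          ENNReal.mul_sub (fun _ _ => hVfin.ne)]
        rw [mul_comm V (ENNReal.ofReal (q ^ a)), mul_comm V (ENNReal.ofReal (p' ^ a))]
  -- the exponential density as a function of T
  set g : ℝ → ℝ≥0∞ := fun t => ENNReal.ofReal (c * Real.exp (-t / (2 * σ ^ 2))) with hg
  have hg_meas : Measurable g := by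
    apply ENNReal.measurable_ofReal.comp
    exact (Real.measurable_exp.comp ((measurable_id.neg).div_const _)).const_mul c
  have hmap : μ.map T = ρ.withDensity g := by
    rw [hμ, hρ]
    ext s hs
    rw [Measure.map_apply hTmeas hs, withDensity_apply _ (hTmeas hs),
        withDensity_apply _ hs, ← setLIntegral_map hs hg_meas hTmeas]
  have hmap2 : μ.map T = volume.withDensity (hdens * g) := by
    rw [hmap, hρeq, ← withDensity_mul _ hdens_meas hg_meas]
  have hGpos : 0 < Real.Gamma a := Real.Gamma_pos_of_pos hapos
  have hrapos : (0:ℝ) < r ^ a := Real.rpow_pos_of_pos hrpos a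
  set K : ℝ≥0∞ := V * ENNReal.ofReal (a * c * Real.Gamma a / r ^ a) with hK
  have hpt : (hdens * g) =ᵐ[volume] fun t => K * gammaPDF a r t := by
    have hne : ∀ᵐ t : ℝ, t ∉ ({0} : Set ℝ) := (Set.countable_singleton 0).ae_notMem volume
    filter_upwards [hne] with t ht
    rw [Set.mem_singleton_iff] at ht
    rcases lt_or_gt_of_ne ht with htneg | htpos
    · rw [Pi.mul_apply, hdens_zero t htneg.le, zero_mul, gammaPDF_of_neg htneg, mul_zero]
    · simp only [Pi.mul_apply, hhd, hg]
      rw [Set.indicator_of_mem (Set.mem_Ioi.mpr htpos),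
        gammaPDF_of_nonneg htpos.le, hK]
      rw [mul_assoc, mul_assoc]
      congr 1
      rw [← ENNReal.ofReal_mul (by positivity), ← ENNReal.ofReal_mul (by positivity)]
      congr 1
      have hexp : -t / (2 * σ ^ 2) = -(r * t) := by
        rw [hr]; field_simp
      rw [hexp]
      field_simp
  have hgpdf_meas : Measurable (gammaPDF a r) := (measurable_gammaPDFReal a r).ennreal_ofReal
  have hmap3 : μ.map T = K • gammaMeasure a r := by
    rw [hmap2, withDensity_congr_ae hpt]
    rw [show (fun t => K * gammaPDF a r t) = K • gammaPDF a r from rfl]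
    rw [withDensity_smul K hgpdf_meas]
    rfl
  haveI hμT : IsProbabilityMeasure (μ.map T) := Measure.isProbabilityMeasure_map hTmeas.aemeasurable
  haveI hgp : IsProbabilityMeasure (gammaMeasure a r) := isProbabilityMeasure_gammaMeasure hapos hrpos
  have hK1 : K = 1 := by
    have h1 : (μ.map T) Set.univ = 1 := measure_univ
    rw [hmap3, Measure.smul_apply, measure_univ, smul_eq_mul, mul_one] at h1
    exact h1
  have hfirst : μ.map T = gammaMeasure a r := by rw [hmap3, hK1, one_smul]
  refine ⟨hfirst, ?_⟩
  -- the mean of the gamma distribution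
  have hmean : ∫ t, t ∂(gammaMeasure a r) = a / r := by
    rw [gammaMeasure]
    rw [show gammaPDF a r = fun t => ((Real.toNNReal (gammaPDFReal a r t) : ℝ≥0) : ℝ≥0∞) from rfl]
    rw [integral_withDensity_eq_integral_smul (measurable_gammaPDFReal a r).real_toNNReal _]
    have heq : ∀ t : ℝ, (Real.toNNReal (gammaPDFReal a r t)) • t = gammaPDFReal a r t * t := by
      intro t
      rw [NNReal.smul_def, Real.coe_toNNReal _ (gammaPDFReal_nonneg hapos hrpos t), smul_eq_mul]
    simp_rw [heq]
    rw [← setIntegral_eq_integral_of_forall_compl_eq_zero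
      (s := Set.Ioi (0:ℝ)) (f := fun t => gammaPDFReal a r t * t) ?_]
    · have hcongr : ∀ t ∈ Set.Ioi (0:ℝ), gammaPDFReal a r t * t =
          (r ^ a / Real.Gamma a) * (t ^ ((a + 1) - 1) * Real.exp (-(r * t))) := by
        intro t ht
        rw [Set.mem_Ioi] at ht
        simp only [gammaPDFReal]
        rw [if_pos ht.le]
        rw [show (a + 1) - 1 = (a - 1) + 1 by ring, Real.rpow_add ht, Real.rpow_one]
        ring
      rw [setIntegral_congr_fun measurableSet_Ioi hcongr, integral_const_mul,
        Real.integral_rpow_mul_exp_neg_mul_Ioi (by linarith : (0:ℝ) < a + 1) hrpos,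
        Real.Gamma_add_one hapos.ne']
      rw [one_div, Real.inv_rpow hrpos.le, Real.rpow_add hrpos, Real.rpow_one]
      field_simp
    · intro t ht
      rw [Set.mem_Ioi, not_lt] at ht
      rcases lt_or_eq_of_le ht with h | h
      · simp only [gammaPDFReal]
        rw [if_neg (not_le.mpr h), zero_mul]
      · simp [h]
  have hswap : ∫ z, (N z) ^ 2 ∂μ = ∫ t, t ∂(μ.map T) :=
    (integral_map hTmeas.aemeasurable aestronglyMeasurable_id).symm
  rw [hswap, hfirst, hmean, ha, hr]
  field_simp
end

section
/- Let ζ_1, ..., ζ_t be an ℝ^d-valued martingale difference sequence with respect to a filtration (𝔉_τ), i.e., E[ζ_τ | 𝔉_{τ−1}] = 0, and suppose ‖ζ_τ‖_2 ≤ c_τ almost surely. Then for every λ > 0, P(‖Σ_{τ=1}^{t} ζ_τ‖_2 ≥ λ) ≤ 4 exp(−λ²/(4 Σ_{τ=1}^{t} c_τ²)). -/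
open MeasureTheory

private lemma sinh_le_mul_cosh {x : ℝ} (hx : 0 ≤ x) : Real.sinh x ≤ x * Real.cosh x := by
  have hmono : MonotoneOn (fun u : ℝ => u * Real.cosh u - Real.sinh u) (Set.Ici 0) := by
    apply monotoneOn_of_deriv_nonneg (convex_Ici 0)
    · exact ((continuous_id.mul Real.continuous_cosh).sub Real.continuous_sinh).continuousOn
    · intro u _
      exact (((hasDerivAt_id u).mul (Real.hasDerivAt_cosh u)).sub
        (Real.hasDerivAt_sinh u)).differentiableAt.differentiableWithinAt
    · intro u hu
      rw [interior_Ici] at hu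
      have hder : HasDerivAt (fun u : ℝ => u * Real.cosh u - Real.sinh u)
          (1 * Real.cosh u + u * Real.sinh u - Real.cosh u) u :=
        ((hasDerivAt_id u).mul (Real.hasDerivAt_cosh u)).sub (Real.hasDerivAt_sinh u)
      rw [hder.deriv]
      have hs : 0 ≤ Real.sinh u := Real.sinh_nonneg_iff.2 hu.le
      simp only [id_eq, one_mul]
      nlinarith [(Set.mem_Ioi.1 hu).le]
  have h0 : (0:ℝ) ∈ Set.Ici (0:ℝ) := Set.self_mem_Ici
  have := hmono h0 hx hx
  simp only [Real.sinh_zero, Real.cosh_zero, mul_one, zero_mul, sub_zero, zero_sub, neg_zero] at this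
  linarith

private lemma monotoneOn_sinh_div : MonotoneOn (fun u : ℝ => Real.sinh u / u) (Set.Ioi 0) := by
  apply monotoneOn_of_deriv_nonneg (convex_Ioi 0)
  · exact Real.continuous_sinh.continuousOn.div continuousOn_id (fun u hu => ne_of_gt hu)
  · intro u hu
    rw [interior_Ioi] at hu
    exact ((Real.hasDerivAt_sinh u).div (hasDerivAt_id u)
      (ne_of_gt hu)).differentiableAt.differentiableWithinAt
  · intro u hu
    rw [interior_Ioi] at hu
    have hder : HasDerivAt (fun u : ℝ => Real.sinh u / u)
        ((Real.cosh u * u - Real.sinh u * 1) / u ^ 2) u :=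
      (Real.hasDerivAt_sinh u).div (hasDerivAt_id u) (ne_of_gt hu)
    rw [hder.deriv]
    have h1 := sinh_le_mul_cosh hu.le
    apply div_nonneg _ (pow_pos hu 2).le
    simp only [id_eq, mul_one]
    nlinarith

private lemma hasDerivAt_cosh_sqrt {t : ℝ} (ht : 0 < t) :
    HasDerivAt (fun t : ℝ => Real.cosh (Real.sqrt t))
      (Real.sinh (Real.sqrt t) * (1 / (2 * Real.sqrt t))) t :=
  (Real.hasDerivAt_cosh _).comp t (Real.hasDerivAt_sqrt (ne_of_gt ht))

private lemma convexOn_cosh_sqrt :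
    ConvexOn ℝ (Set.Ici 0) (fun t : ℝ => Real.cosh (Real.sqrt t)) := by
  apply MonotoneOn.convexOn_of_deriv (convex_Ici 0)
  · exact Real.continuous_cosh.comp_continuousOn Real.continuous_sqrt.continuousOn
  · intro t ht
    rw [interior_Ici] at ht
    exact (hasDerivAt_cosh_sqrt ht).differentiableAt.differentiableWithinAt
  · rw [interior_Ici]
    intro s hs t ht hst
    rw [(hasDerivAt_cosh_sqrt hs).deriv, (hasDerivAt_cosh_sqrt ht).deriv]
    have hss : (0:ℝ) < Real.sqrt s := Real.sqrt_pos.2 hs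
    have hts : (0:ℝ) < Real.sqrt t := Real.sqrt_pos.2 ht
    have hmono := monotoneOn_sinh_div hss hts (Real.sqrt_le_sqrt hst)
    have e : ∀ u : ℝ, 0 < u → Real.sinh u * (1 / (2 * u)) = (Real.sinh u / u) / 2 := by
      intro u hu
      rw [mul_one_div, div_div, mul_comm]
    rw [e _ hss, e _ hts]
    linarith [hmono]

noncomputable def pinelisK (lam c a : ℝ) : ℝ :=
  if a * c = 0 then 0 else Real.sinh (lam * a) * Real.sinh (lam * c) / (a * c)

private lemma key_pointwise {d : ℕ} (lam c : ℝ) (hlam : 0 ≤ lam)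
    (x y : EuclideanSpace ℝ (Fin d)) (hy : ‖y‖ ≤ c) :
    Real.cosh (lam * ‖x + y‖) ≤
      Real.cosh (lam * ‖x‖) * Real.cosh (lam * c) + pinelisK lam c ‖x‖ * (inner ℝ x y : ℝ) := by
  have hc : 0 ≤ c := (norm_nonneg y).trans hy
  set a := ‖x‖ with ha_def
  have ha : 0 ≤ a := norm_nonneg x
  by_cases hac : a * c = 0
  · rw [pinelisK, if_pos hac, zero_mul, add_zero]
    rcases mul_eq_zero.1 hac with h | h
    · -- a = 0, so x = 0
      have hx0 : x = 0 := norm_eq_zero.1 h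
      rw [hx0]
      simp only [zero_add, norm_zero, mul_zero, Real.cosh_zero, one_mul] at *
      rw [h, mul_zero, Real.cosh_zero, one_mul]
      apply Real.cosh_le_cosh.2
      rw [abs_of_nonneg (by positivity), abs_of_nonneg (by positivity)]
      exact mul_le_mul_of_nonneg_left hy hlam
    · -- c = 0, so y = 0
      have hy0 : y = 0 := norm_eq_zero.1 (le_antisymm (h ▸ hy) (norm_nonneg y))
      rw [hy0, add_zero, h, mul_zero, Real.cosh_zero, mul_one]
  · obtain ⟨h1, h2⟩ := mul_ne_zero_iff.1 hac
    have ha' : 0 < a := ha.lt_of_ne (Ne.symm h1)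
    have hc' : 0 < c := hc.lt_of_ne (Ne.symm h2)
    set s : ℝ := (inner ℝ x y : ℝ) with hs_def
    have hs : |s| ≤ a * c := by
      refine (abs_real_inner_le_norm x y).trans ?_
      exact mul_le_mul_of_nonneg_left hy (norm_nonneg x)
    set F := fun t : ℝ => Real.cosh (Real.sqrt t) with hF_def
    have hFval : ∀ r : ℝ, 0 ≤ r → F (lam ^ 2 * r ^ 2) = Real.cosh (lam * r) := by
      intro r hr
      simp only [hF_def]
      rw [← mul_pow, Real.sqrt_sq (by positivity)]
    -- step 0/1
    have h1 : Real.cosh (lam * ‖x + y‖) ≤ F (lam ^ 2 * (a ^ 2 + 2 * s + c ^ 2)) := by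
      rw [← hFval _ (norm_nonneg (x + y))]
      simp only [hF_def]
      apply Real.cosh_le_cosh.2
      rw [abs_of_nonneg (Real.sqrt_nonneg _), abs_of_nonneg (Real.sqrt_nonneg _)]
      apply Real.sqrt_le_sqrt
      have hxy2 : ‖x + y‖ ^ 2 = a ^ 2 + 2 * s + ‖y‖ ^ 2 := norm_add_sq_real x y
      have hy2 : ‖y‖ ^ 2 ≤ c ^ 2 := by
        apply pow_le_pow_left₀ (norm_nonneg y) hy
      nlinarith [sq_nonneg lam]
    -- step 2 : convexity
    set θ : ℝ := (a * c - s) / (2 * (a * c)) with hθ_def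
    have hac' : 0 < a * c := mul_pos ha' hc'
    have habs := abs_le.1 hs
    have hθ0 : 0 ≤ θ := by
      apply div_nonneg (by linarith [habs.2]) (by linarith)
    have hθ1 : 0 ≤ 1 - θ := by
      rw [hθ_def]
      rw [sub_nonneg, div_le_one (by linarith)]
      linarith [habs.1]
    have hu : lam ^ 2 * (a - c) ^ 2 ∈ Set.Ici (0:ℝ) := Set.mem_Ici.2 (by positivity)
    have hv : lam ^ 2 * (a + c) ^ 2 ∈ Set.Ici (0:ℝ) := Set.mem_Ici.2 (by positivity)
    have hconv := convexOn_cosh_sqrt.2 hu hv hθ0 hθ1 (by ring)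
    have harg : θ • (lam ^ 2 * (a - c) ^ 2) + (1 - θ) • (lam ^ 2 * (a + c) ^ 2)
        = lam ^ 2 * (a ^ 2 + 2 * s + c ^ 2) := by
      simp only [smul_eq_mul, hθ_def]
      field_simp
      ring
    rw [harg] at hconv
    have h2 : F (lam ^ 2 * (a ^ 2 + 2 * s + c ^ 2)) ≤
        θ * F (lam ^ 2 * (a - c) ^ 2) + (1 - θ) * F (lam ^ 2 * (a + c) ^ 2) := by
      simpa only [smul_eq_mul] using hconv
    -- step 3 : compute endpoint values
    have hFu : F (lam ^ 2 * (a - c) ^ 2) =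
        Real.cosh (lam * a) * Real.cosh (lam * c) - Real.sinh (lam * a) * Real.sinh (lam * c) := by
      simp only [hF_def]
      rw [← mul_pow, Real.sqrt_sq_eq_abs, Real.cosh_abs, mul_sub, Real.cosh_sub]
    have hFv : F (lam ^ 2 * (a + c) ^ 2) =
        Real.cosh (lam * a) * Real.cosh (lam * c) + Real.sinh (lam * a) * Real.sinh (lam * c) := by
      simp only [hF_def]
      rw [← mul_pow, Real.sqrt_sq (by positivity), mul_add, Real.cosh_add]
    have hK : pinelisK lam c a = Real.sinh (lam * a) * Real.sinh (lam * c) / (a * c) := by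
      rw [pinelisK, if_neg hac]
    calc Real.cosh (lam * ‖x + y‖) ≤ F (lam ^ 2 * (a ^ 2 + 2 * s + c ^ 2)) := h1
      _ ≤ θ * F (lam ^ 2 * (a - c) ^ 2) + (1 - θ) * F (lam ^ 2 * (a + c) ^ 2) := h2
      _ = Real.cosh (lam * a) * Real.cosh (lam * c) + pinelisK lam c a * s := by
          rw [hFu, hFv, hK, hθ_def]
          field_simp
          ring


private lemma condexp_coord_zero {Ω : Type*} {m : MeasurableSpace Ω} {m0 : MeasurableSpace Ω} {μ : Measure Ω}
    [IsProbabilityMeasure μ] (hm : m ≤ m0) {d : ℕ}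
    {ζ : Ω → EuclideanSpace ℝ (Fin d)} (hζ : Integrable ζ μ)
    (h : μ[ζ|m] =ᵐ[μ] 0) (i : Fin d) :
    μ[fun ω => ζ ω i|m] =ᵐ[μ] 0 := by
  haveI : SigmaFinite (μ.trim hm) := inferInstance
  have hζi : Integrable (fun ω => ζ ω i) μ := (EuclideanSpace.proj i (𝕜 := ℝ)).integrable_comp hζ
  refine (ae_eq_condExp_of_forall_setIntegral_eq hm hζi
    (fun s _ _ => (integrable_zero _ _ _).integrableOn)
    (fun s hs hμs => ?_)
    (stronglyMeasurable_const.aestronglyMeasurable )).symm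
  have h1 : ∫ ω in s, ζ ω ∂μ = 0 := by
    rw [← setIntegral_condExp hm hζ hs]
    rw [setIntegral_congr_ae (hm s hs) (h.mono fun ω hω _ => hω)]
    simp
  have h2 : ∫ ω in s, ζ ω i ∂μ = (EuclideanSpace.proj i (𝕜 := ℝ)) (∫ ω in s, ζ ω ∂μ) :=
    ((EuclideanSpace.proj i (𝕜 := ℝ)).integral_comp_comm hζ.integrableOn)
  rw [h2, h1]
  simp



private lemma pinelisK_mul_le {lam c a s : ℝ} (hlam : 0 ≤ lam) (ha : 0 ≤ a) (hc : 0 ≤ c)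
    (hs : |s| ≤ a * c) :
    |pinelisK lam c a * s| ≤
      lam ^ 2 * Real.cosh (lam * a) * Real.cosh (lam * c) * (a * c) := by
  have hrhs0 : 0 ≤ lam ^ 2 * Real.cosh (lam * a) * Real.cosh (lam * c) :=
    mul_nonneg (mul_nonneg (sq_nonneg lam) (le_of_lt (Real.cosh_pos _))) (le_of_lt (Real.cosh_pos _))
  by_cases hac : a * c = 0
  · rw [pinelisK, if_pos hac, zero_mul, abs_zero]
    exact mul_nonneg hrhs0 (mul_nonneg ha hc)
  · obtain ⟨h1, h2⟩ := mul_ne_zero_iff.1 hac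
    have ha' : 0 < a := ha.lt_of_ne (Ne.symm h1)
    have hc' : 0 < c := hc.lt_of_ne (Ne.symm h2)
    have hac' : 0 < a * c := mul_pos ha' hc'
    have hK : pinelisK lam c a = Real.sinh (lam * a) * Real.sinh (lam * c) / (a * c) := by
      rw [pinelisK, if_neg hac]
    have hsinh_a : 0 ≤ Real.sinh (lam * a) := Real.sinh_nonneg_iff.2 (by positivity)
    have hsinh_c : 0 ≤ Real.sinh (lam * c) := Real.sinh_nonneg_iff.2 (by positivity)
    have hK0 : 0 ≤ pinelisK lam c a := by
      rw [hK]; exact div_nonneg (mul_nonneg hsinh_a hsinh_c) hac'.le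
    rw [abs_mul, abs_of_nonneg hK0]
    calc pinelisK lam c a * |s| ≤ pinelisK lam c a * (a * c) :=
          mul_le_mul_of_nonneg_left hs hK0
      _ = Real.sinh (lam * a) * Real.sinh (lam * c) := by
          rw [hK, div_mul_cancel₀ _ (ne_of_gt hac')]
      _ ≤ (lam * a * Real.cosh (lam * a)) * (lam * c * Real.cosh (lam * c)) := by
          apply mul_le_mul (sinh_le_mul_cosh (by positivity)) (sinh_le_mul_cosh (by positivity))
            hsinh_c (by positivity)
      _ = lam ^ 2 * Real.cosh (lam * a) * Real.cosh (lam * c) * (a * c) := by ring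



private lemma coord_abs_le_norm {d : ℕ} (x : EuclideanSpace ℝ (Fin d)) (i : Fin d) :
    |x i| ≤ ‖x‖ := by
  rw [EuclideanSpace.norm_eq]
  rw [← Real.sqrt_sq (abs_nonneg (x i))]
  apply Real.sqrt_le_sqrt
  rw [sq_abs]
  have : (x i) ^ 2 = ‖x i‖ ^ 2 := by rw [Real.norm_eq_abs, sq_abs]
  rw [this]
  exact Finset.single_le_sum (fun j _ => sq_nonneg ‖x j‖) (Finset.mem_univ i)

private lemma inner_euclidean {d : ℕ} (x y : EuclideanSpace ℝ (Fin d)) :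
    (inner ℝ x y : ℝ) = ∑ i, x i * y i := by
  simp [PiLp.inner_apply, RCLike.inner_apply, mul_comm]


theorem pinelis_azuma
    {Ω : Type*} {m : MeasurableSpace Ω} (μ : Measure Ω) [IsProbabilityMeasure μ]
    (ℱ : Filtration ℕ m) (d : ℕ)
    (ζ : ℕ → Ω → EuclideanSpace ℝ (Fin d))
    (hadapted : ∀ τ, StronglyMeasurable[ℱ τ] (ζ τ))
    (t : ℕ) (c : ℕ → ℝ)
    (hmds : ∀ τ ∈ Finset.Icc 1 t, μ[ζ τ | ℱ (τ - 1)] =ᵐ[μ] 0)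
    (hbdd : ∀ τ ∈ Finset.Icc 1 t, ∀ᵐ ω ∂μ, ‖ζ τ ω‖ ≤ c τ)
    (l : ℝ) (hl : 0 < l) :
    μ {ω | l ≤ ‖∑ τ ∈ Finset.Icc 1 t, ζ τ ω‖}
      ≤ ENNReal.ofReal (4 * Real.exp (-l ^ 2 / (4 * ∑ τ ∈ Finset.Icc 1 t, (c τ) ^ 2))) := by
  classical
  have hm : ∀ n, ℱ n ≤ m := fun n => ℱ.le n
  have hae : ∀ᵐ ω ∂μ, ∀ τ, τ ∈ Finset.Icc 1 t → ‖ζ τ ω‖ ≤ c τ := by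
    rw [MeasureTheory.ae_all_iff]
    intro τ
    by_cases hτ : τ ∈ Finset.Icc 1 t
    · filter_upwards [hbdd τ hτ] with ω h _; exact h
    · filter_upwards with ω h; exact absurd h hτ
  haveI : (MeasureTheory.ae μ).NeBot := ae_neBot.2 (IsProbabilityMeasure.ne_zero μ)
  have hc0 : ∀ τ ∈ Finset.Icc 1 t, 0 ≤ c τ := fun τ hτ => by
    obtain ⟨ω, hω⟩ := (hbdd τ hτ).exists
    exact (norm_nonneg _).trans hω
  set S : ℕ → Ω → EuclideanSpace ℝ (Fin d) := fun n ω => ∑ τ ∈ Finset.Icc 1 n, ζ τ ω with hS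
  have hSsm : ∀ n, StronglyMeasurable[ℱ n] (S n) := by
    intro n
    have h1 : StronglyMeasurable[ℱ n] (∑ τ ∈ Finset.Icc 1 n, ζ τ) :=
      Finset.stronglyMeasurable_sum _ fun τ hτ =>
        (hadapted τ).mono (ℱ.mono (Finset.mem_Icc.1 hτ).2)
    have heq : S n = ∑ τ ∈ Finset.Icc 1 n, ζ τ := by
      funext ω; rw [hS]; simp [Finset.sum_apply]
    rw [heq]; exact h1
  have hSaesm : ∀ n, AEStronglyMeasurable (S n) μ := fun n =>
    ((hSsm n).mono (hm n)).aestronglyMeasurable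
  have hζaesm : ∀ τ, AEStronglyMeasurable (ζ τ) μ := fun τ =>
    ((hadapted τ).mono (hm τ)).aestronglyMeasurable
  have hζint : ∀ τ ∈ Finset.Icc 1 t, Integrable (ζ τ) μ := fun τ hτ =>
    Integrable.mono' (integrable_const (c τ)) (hζaesm τ) (hbdd τ hτ)
  set B : ℕ → ℝ := fun n => ∑ τ ∈ Finset.Icc 1 n, c τ with hB
  have hIccsub : ∀ {n : ℕ}, n ≤ t → Finset.Icc 1 n ⊆ Finset.Icc 1 t := fun {n} hn =>
    Finset.Icc_subset_Icc le_rfl hn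
  have hSbd : ∀ n, n ≤ t → ∀ᵐ ω ∂μ, ‖S n ω‖ ≤ B n := by
    intro n hn
    filter_upwards [hae] with ω hω
    exact (norm_sum_le _ _).trans (Finset.sum_le_sum fun τ hτ => hω τ (hIccsub hn hτ))
  have hcosh_meas : ∀ (lam : ℝ) (n : ℕ),
      AEStronglyMeasurable (fun ω => Real.cosh (lam * ‖S n ω‖)) μ := fun lam n =>
    (Real.continuous_cosh.comp (continuous_const.mul continuous_norm)).comp_aestronglyMeasurable
      (hSaesm n)
  have hcosh_mono : ∀ lam r r' : ℝ, 0 ≤ lam → 0 ≤ r → r ≤ r' →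
      Real.cosh (lam * r) ≤ Real.cosh (lam * r') := by
    intro lam r r' hlam hr h
    apply Real.cosh_le_cosh.2
    rw [abs_of_nonneg (by positivity), abs_of_nonneg (mul_nonneg hlam (hr.trans h))]
    exact mul_le_mul_of_nonneg_left h hlam
  have hcoshS_int : ∀ (lam : ℝ), 0 ≤ lam → ∀ n, n ≤ t →
      Integrable (fun ω => Real.cosh (lam * ‖S n ω‖)) μ := by
    intro lam hlam n hn
    refine Integrable.mono' (integrable_const (Real.cosh (lam * B n))) (hcosh_meas lam n) ?_
    filter_upwards [hSbd n hn] with ω h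
    rw [Real.norm_eq_abs, abs_of_pos (Real.cosh_pos _)]
    exact hcosh_mono lam _ _ hlam (norm_nonneg _) h
  -- key induction
  have key : ∀ (lam : ℝ), 0 ≤ lam → ∀ n, n ≤ t →
      ∫ ω, Real.cosh (lam * ‖S n ω‖) ∂μ ≤ ∏ τ ∈ Finset.Icc 1 n, Real.cosh (lam * c τ) := by
    intro lam hlam n
    induction n with
    | zero =>
      intro _
      have h0 : Finset.Icc 1 0 = (∅ : Finset ℕ) := Finset.Icc_eq_empty (by omega)
      simp [hS, h0]
    | succ n ih =>
      intro hn1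
      have hn : n ≤ t := Nat.le_of_succ_le hn1
      have ihn := ih hn
      have hmem : n + 1 ∈ Finset.Icc 1 t := Finset.mem_Icc.2 ⟨Nat.le_add_left 1 n, hn1⟩
      have hsplit : ∀ ω, S (n + 1) ω = S n ω + ζ (n + 1) ω := fun ω =>
        Finset.sum_Icc_succ_top (Nat.le_add_left 1 n) _
      set c' : ℝ := c (n + 1) with hc'
      have hc'0 : 0 ≤ c' := hc0 _ hmem
      set K : Ω → ℝ := fun ω => pinelisK lam c' ‖S n ω‖ with hK
      have hkmeas : Measurable fun a : ℝ => pinelisK lam c' a := by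
        unfold pinelisK
        refine Measurable.ite ?_ measurable_const ?_
        · exact measurableSet_eq_fun (measurable_id.mul_const _) measurable_const
        · exact ((Real.continuous_sinh.measurable.comp
            (measurable_id.const_mul lam)).mul_const _).div (measurable_id.mul_const _)
      have hKsm : StronglyMeasurable[ℱ n] K := by
        have hnorm : Measurable fun x : EuclideanSpace ℝ (Fin d) => ‖x‖ :=
          continuous_norm.measurable
        exact (hkmeas.comp (hnorm.comp (hSsm n).measurable)).stronglyMeasurable
      set CB : ℝ := lam ^ 2 * Real.cosh (lam * B n) * Real.cosh (lam * c') * (B n * c') with hCB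
      have hKbd : ∀ (s : ℝ) (ω : Ω), |s| ≤ ‖S n ω‖ * c' → ‖S n ω‖ ≤ B n → |K ω * s| ≤ CB := by
        intro s ω hsle hSle
        refine (pinelisK_mul_le hlam (norm_nonneg _) hc'0 hsle).trans ?_
        have h1 : Real.cosh (lam * ‖S n ω‖) ≤ Real.cosh (lam * B n) :=
          hcosh_mono lam _ _ hlam (norm_nonneg _) hSle
        have h2 : ‖S n ω‖ * c' ≤ B n * c' := mul_le_mul_of_nonneg_right hSle hc'0
        have h3 : lam ^ 2 * Real.cosh (lam * ‖S n ω‖) * Real.cosh (lam * c')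
            ≤ lam ^ 2 * Real.cosh (lam * B n) * Real.cosh (lam * c') :=
          mul_le_mul_of_nonneg_right (mul_le_mul_of_nonneg_left h1 (sq_nonneg lam))
            (le_of_lt (Real.cosh_pos _))
        rw [hCB]
        exact mul_le_mul h3 h2 (mul_nonneg (norm_nonneg _) hc'0)
          (mul_nonneg (mul_nonneg (sq_nonneg lam) (le_of_lt (Real.cosh_pos _)))
            (le_of_lt (Real.cosh_pos _)))
      set f : Fin d → Ω → ℝ := fun i ω => K ω * S n ω i with hf
      set g : Fin d → Ω → ℝ := fun i ω => ζ (n + 1) ω i with hg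
      have hfg_bd : ∀ i, ∀ᵐ ω ∂μ, ‖f i ω * g i ω‖ ≤ CB := by
        intro i
        filter_upwards [hSbd n hn, hae] with ω h1 h2
        rw [Real.norm_eq_abs]
        have hs : |S n ω i * ζ (n + 1) ω i| ≤ ‖S n ω‖ * c' := by
          rw [abs_mul]
          exact mul_le_mul (coord_abs_le_norm _ _)
            ((coord_abs_le_norm _ _).trans (h2 _ hmem)) (abs_nonneg _) (norm_nonneg _)
        have := hKbd _ ω hs h1
        rw [show f i ω * g i ω = K ω * (S n ω i * ζ (n + 1) ω i) from mul_assoc _ _ _]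
        exact this
      have hfsm : ∀ i, StronglyMeasurable[ℱ n] (f i) := by
        intro i
        have h1 : Measurable fun x : EuclideanSpace ℝ (Fin d) => x i :=
          (EuclideanSpace.proj i (𝕜 := ℝ)).continuous.measurable
        exact hKsm.mul (h1.comp (hSsm n).measurable).stronglyMeasurable
      have hfaesm : ∀ i, AEStronglyMeasurable (f i) μ := fun i =>
        ((hfsm i).mono (hm n)).aestronglyMeasurable
      have hgaesm : ∀ i, AEStronglyMeasurable (g i) μ := fun i =>
        (EuclideanSpace.proj i (𝕜 := ℝ)).continuous.comp_aestronglyMeasurable (hζaesm (n + 1))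
      have hgint : ∀ i, Integrable (g i) μ := fun i =>
        (EuclideanSpace.proj i (𝕜 := ℝ)).integrable_comp (hζint _ hmem)
      have hfgint : ∀ i, Integrable (fun ω => f i ω * g i ω) μ := fun i =>
        Integrable.mono' (integrable_const CB) ((hfaesm i).mul (hgaesm i)) (hfg_bd i)
      have hcoord : ∀ i, μ[g i|ℱ n] =ᵐ[μ] 0 := by
        intro i
        have h0 := hmds (n + 1) hmem
        simp only [Nat.add_sub_cancel] at h0
        exact condexp_coord_zero (hm n) (hζint _ hmem) h0 i
      have hfgzero : ∀ i, ∫ ω, f i ω * g i ω ∂μ = 0 := by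
        intro i
        have hpull := condExp_mul_of_stronglyMeasurable_left (hfsm i) (hfgint i) (hgint i)
        have h0 : μ[f i * g i|ℱ n] =ᵐ[μ] 0 := by
          refine hpull.trans ?_
          filter_upwards [hcoord i] with ω hω
          simp only [Pi.mul_apply, hω, Pi.zero_apply, mul_zero]
        calc ∫ ω, f i ω * g i ω ∂μ = ∫ ω, (μ[f i * g i|ℱ n]) ω ∂μ :=
              (integral_condExp (hm n)).symm
          _ = ∫ _ω, (0 : ℝ) ∂μ := integral_congr_ae h0
          _ = 0 := integral_zero _ _
      set Φ : Ω → ℝ := fun ω => K ω * (inner ℝ (S n ω) (ζ (n + 1) ω) : ℝ) with hΦ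
      have hΦeq : Φ = fun ω => ∑ i, f i ω * g i ω := by
        funext ω
        rw [hΦ]
        simp only
        rw [inner_euclidean, Finset.mul_sum]
        exact Finset.sum_congr rfl fun i _ => by rw [hf, hg]; ring
      have hΦint : Integrable Φ μ := by
        rw [hΦeq]
        exact integrable_finset_sum (f := fun i ω => f i ω * g i ω) Finset.univ
          (fun i _ => hfgint i)
      have hΦzero : ∫ ω, Φ ω ∂μ = 0 := by
        rw [hΦeq, integral_finset_sum (f := fun i ω => f i ω * g i ω) Finset.univ
          (fun i _ => hfgint i)]
        simp [hfgzero]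
      have hpt : ∀ᵐ ω ∂μ, Real.cosh (lam * ‖S (n + 1) ω‖) ≤
          Real.cosh (lam * ‖S n ω‖) * Real.cosh (lam * c') + Φ ω := by
        filter_upwards [hae] with ω hω
        rw [hsplit ω]
        exact key_pointwise lam c' hlam (S n ω) (ζ (n + 1) ω) (hω _ hmem)
      have hint1 : Integrable (fun ω => Real.cosh (lam * ‖S (n + 1) ω‖)) μ :=
        hcoshS_int lam hlam _ hn1
      have hint2a : Integrable (fun ω => Real.cosh (lam * ‖S n ω‖) * Real.cosh (lam * c')) μ :=
        (hcoshS_int lam hlam n hn).mul_const _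
      calc ∫ ω, Real.cosh (lam * ‖S (n + 1) ω‖) ∂μ
          ≤ ∫ ω, (Real.cosh (lam * ‖S n ω‖) * Real.cosh (lam * c') + Φ ω) ∂μ :=
            integral_mono_ae hint1 (hint2a.add hΦint) hpt
        _ = (∫ ω, Real.cosh (lam * ‖S n ω‖) ∂μ) * Real.cosh (lam * c') + ∫ ω, Φ ω ∂μ := by
            rw [integral_add hint2a hΦint, integral_mul_const]
        _ = (∫ ω, Real.cosh (lam * ‖S n ω‖) ∂μ) * Real.cosh (lam * c') := by
            rw [hΦzero, add_zero]
        _ ≤ (∏ τ ∈ Finset.Icc 1 n, Real.cosh (lam * c τ)) * Real.cosh (lam * c') :=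
            mul_le_mul_of_nonneg_right ihn (le_of_lt (Real.cosh_pos _))
        _ = ∏ τ ∈ Finset.Icc 1 (n + 1), Real.cosh (lam * c τ) :=
            (Finset.prod_Icc_succ_top (Nat.le_add_left 1 n) _).symm
  -- conclusion
  set sig2 : ℝ := ∑ τ ∈ Finset.Icc 1 t, (c τ) ^ 2 with hsig2
  have hsig2nonneg : 0 ≤ sig2 := Finset.sum_nonneg fun τ _ => sq_nonneg _
  rcases eq_or_lt_of_le hsig2nonneg with hzero | hpos
  · have h4 : (4 : ℝ) * Real.exp (-l ^ 2 / (4 * sig2)) = 4 := by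
      rw [← hzero]; norm_num
    rw [h4]
    refine le_trans prob_le_one ?_
    rw [show (1 : ENNReal) = ENNReal.ofReal 1 by simp]
    exact ENNReal.ofReal_le_ofReal (by norm_num)
  · set lam : ℝ := l / sig2 with hlam_def
    have hlam : 0 < lam := div_pos hl hpos
    have hkey := key lam hlam.le t le_rfl
    have hprod : ∏ τ ∈ Finset.Icc 1 t, Real.cosh (lam * c τ) ≤
        Real.exp (lam ^ 2 * sig2 / 2) := by
      calc ∏ τ ∈ Finset.Icc 1 t, Real.cosh (lam * c τ)
          ≤ ∏ τ ∈ Finset.Icc 1 t, Real.exp ((lam * c τ) ^ 2 / 2) :=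
            Finset.prod_le_prod (fun τ _ => (Real.cosh_pos _).le)
              (fun τ _ => Real.cosh_le_exp_half_sq _)
        _ = Real.exp (∑ τ ∈ Finset.Icc 1 t, (lam * c τ) ^ 2 / 2) := (Real.exp_sum _ _).symm
        _ = Real.exp (lam ^ 2 * sig2 / 2) := by
            congr 1
            rw [hsig2, ← Finset.sum_div, Finset.mul_sum]
            congr 1
            exact Finset.sum_congr rfl fun τ _ => by ring
    have hnn : 0 ≤ᵐ[μ] fun ω => Real.cosh (lam * ‖S t ω‖) :=
      Filter.Eventually.of_forall fun ω => (Real.cosh_pos _).le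
    have hMar := mul_meas_ge_le_integral_of_nonneg hnn (hcoshS_int lam hlam.le t le_rfl)
      (Real.cosh (lam * l))
    set A : Set Ω := {ω | Real.cosh (lam * l) ≤ Real.cosh (lam * ‖S t ω‖)} with hA
    have hsub : {ω | l ≤ ‖∑ τ ∈ Finset.Icc 1 t, ζ τ ω‖} ⊆ A := fun ω hω =>
      hcosh_mono lam l _ hlam.le hl.le hω
    have hAfin : μ A ≠ ⊤ := measure_ne_top μ A
    have hcoshl_pos : 0 < Real.cosh (lam * l) := Real.cosh_pos _
    have htoReal : (μ A).toReal ≤ Real.exp (lam ^ 2 * sig2 / 2) / Real.cosh (lam * l) := by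
      rw [le_div_iff₀ hcoshl_pos]
      calc (μ A).toReal * Real.cosh (lam * l)
          = Real.cosh (lam * l) * (μ A).toReal := mul_comm _ _
        _ ≤ ∫ ω, Real.cosh (lam * ‖S t ω‖) ∂μ := hMar
        _ ≤ Real.exp (lam ^ 2 * sig2 / 2) := hkey.trans hprod
    have hcosh_ge : Real.exp (lam * l) / 2 ≤ Real.cosh (lam * l) := by
      rw [Real.cosh_eq]
      have := Real.exp_pos (-(lam * l))
      linarith
    have hstep2 : Real.exp (lam ^ 2 * sig2 / 2) / Real.cosh (lam * l)
        ≤ 2 * Real.exp (lam ^ 2 * sig2 / 2 - lam * l) := by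
      rw [Real.exp_sub]
      have h1 : Real.exp (lam ^ 2 * sig2 / 2) / Real.cosh (lam * l)
          ≤ Real.exp (lam ^ 2 * sig2 / 2) / (Real.exp (lam * l) / 2) :=
        div_le_div_of_nonneg_left (Real.exp_pos _).le (by positivity) hcosh_ge
      refine h1.trans ?_
      rw [div_div_eq_mul_div]
      ring_nf
      exact le_refl _
    have hexp_eq : lam ^ 2 * sig2 / 2 - lam * l = -l ^ 2 / (2 * sig2) := by
      rw [hlam_def]
      field_simp
      ring
    have hstep3 : 2 * Real.exp (-l ^ 2 / (2 * sig2)) ≤ 4 * Real.exp (-l ^ 2 / (4 * sig2)) := by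
      have hmono : Real.exp (-l ^ 2 / (2 * sig2)) ≤ Real.exp (-l ^ 2 / (4 * sig2)) := by
        apply Real.exp_le_exp.2
        rw [neg_div, neg_div, neg_le_neg_iff]
        apply div_le_div_of_nonneg_left (sq_nonneg l) (by linarith) (by linarith)
      nlinarith [Real.exp_pos (-l ^ 2 / (2 * sig2)), Real.exp_pos (-l ^ 2 / (4 * sig2))]
    calc μ {ω | l ≤ ‖∑ τ ∈ Finset.Icc 1 t, ζ τ ω‖} ≤ μ A := measure_mono hsub
      _ = ENNReal.ofReal ((μ A).toReal) := (ENNReal.ofReal_toReal hAfin).symm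
      _ ≤ ENNReal.ofReal (4 * Real.exp (-l ^ 2 / (4 * sig2))) := by
          apply ENNReal.ofReal_le_ofReal
          calc (μ A).toReal ≤ Real.exp (lam ^ 2 * sig2 / 2) / Real.cosh (lam * l) := htoReal
            _ ≤ 2 * Real.exp (lam ^ 2 * sig2 / 2 - lam * l) := hstep2
            _ = 2 * Real.exp (-l ^ 2 / (2 * sig2)) := by rw [hexp_eq]
            _ ≤ 4 * Real.exp (-l ^ 2 / (4 * sig2)) := hstep3
end

section
/- Induction lemma for Frank–Wolfe under strong convexity: suppose a nonnegative sequence h_t satisfies, for all t ≥ 1, h_{t+1} ≤ h_t − (γ√(2μ)/(t+1))√h_t + C_1/(t+1)^{3/2} + C_2/(t+1)² whenever √h_t > γ√(2μ)/(t+1), and h_{t+1} ≤ C_1/(t+1)^{3/2} + C_2/(t+1)² otherwise; assume additionally C_1, C_2 ≤ βD⁰²-type bounds with βD² ≥ γ²μ and that h_t ≤ 3(βD² + C_1 + C_2)/√(t+1) for all t. Then with B := 9(βD² + C_1 + C_2)²/(γ²μ), we have h_t ≤ B/(t+1) for all t ≥ 1. -/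
private lemma fw_mono (a x y : ℝ) (hx : 0 ≤ x) (ha : a ≤ Real.sqrt x) (hxy : x ≤ y) :
    x - a * Real.sqrt x ≤ y - a * Real.sqrt y := by
  have hy : 0 ≤ y := hx.trans hxy
  have h1 := Real.sq_sqrt hx
  have h2 := Real.sq_sqrt hy
  have h3 : Real.sqrt x ≤ Real.sqrt y := Real.sqrt_le_sqrt hxy
  nlinarith [Real.sqrt_nonneg x, Real.sqrt_nonneg y]


set_option maxHeartbeats 800000 in
theorem fw_strongly_convex_induction
    (h : ℕ → ℝ) (γ μ β D C1 C2 : ℝ)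
    (hγ : 0 < γ) (hμ : 0 < μ) (hβ : 0 < β) (hD : 0 < D)
    (hC1 : 0 ≤ C1) (hC2 : 0 ≤ C2)
    (hβD : γ ^ 2 * μ ≤ β * D ^ 2)
    (hpos : ∀ t, 0 ≤ h t)
    (h1 : h 1 ≤ β * D ^ 2 / 2)
    (hrec1 : ∀ t : ℕ, 1 ≤ t → γ * Real.sqrt (2 * μ) / ((t : ℝ) + 1) < Real.sqrt (h t) →
      h (t + 1) ≤ h t - γ * Real.sqrt (2 * μ) / ((t : ℝ) + 1) * Real.sqrt (h t)
        + C1 / ((t : ℝ) + 1) ^ ((3 : ℝ) / 2) + C2 / ((t : ℝ) + 1) ^ 2)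
    (hrec2 : ∀ t : ℕ, 1 ≤ t → Real.sqrt (h t) ≤ γ * Real.sqrt (2 * μ) / ((t : ℝ) + 1) →
      h (t + 1) ≤ C1 / ((t : ℝ) + 1) ^ ((3 : ℝ) / 2) + C2 / ((t : ℝ) + 1) ^ 2)
    (hslow : ∀ t : ℕ, 1 ≤ t → h t ≤ 3 * (β * D ^ 2 + C1 + C2) / Real.sqrt ((t : ℝ) + 1)) :
    ∀ t ≥ 1, h t ≤ 9 * (β * D ^ 2 + C1 + C2) ^ 2 / (γ ^ 2 * μ) / ((t : ℝ) + 1) := by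
  obtain ⟨M, hM_def⟩ : ∃ M : ℝ, M = β * D ^ 2 + C1 + C2 := ⟨_, rfl⟩
  rw [← hM_def] at hslow ⊢
  obtain ⟨B, hB_def⟩ : ∃ B : ℝ, B = 9 * M ^ 2 / (γ ^ 2 * μ) := ⟨_, rfl⟩
  rw [← hB_def]
  have hγμ : 0 < γ ^ 2 * μ := by positivity
  have hMγμ : γ ^ 2 * μ ≤ M := le_trans hβD (by rw [hM_def]; nlinarith)
  have hM0 : 0 < M := lt_of_lt_of_le hγμ hMγμ
  have hBγμ : B * (γ ^ 2 * μ) = 9 * M ^ 2 := by rw [hB_def]; exact div_mul_cancel₀ _ (ne_of_gt hγμ)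
  have hB9 : 9 * M ≤ B := by rw [hB_def, le_div_iff₀ hγμ]; nlinarith
  have hB0 : 0 < B := lt_of_lt_of_le (by positivity) hB9
  have hβDM : β * D ^ 2 ≤ M := by rw [hM_def]; linarith
  intro t ht
  induction t, ht using Nat.le_induction with
  | base =>
    norm_num
    calc h 1 ≤ β * D ^ 2 / 2 := h1
      _ ≤ B / 2 := by nlinarith
  | succ s hs IH =>
    push_cast
    obtain ⟨n, hn_def⟩ : ∃ n : ℝ, n = (s : ℝ) + 1 := ⟨_, rfl⟩
    rw [← hn_def] at IH ⊢
    have hs1 : (1 : ℝ) ≤ (s : ℝ) := by exact_mod_cast hs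
    have hn2 : (2 : ℝ) ≤ n := by rw [hn_def]; linarith
    have hn0 : (0 : ℝ) < n := by linarith
    have hrn : (0 : ℝ) ≤ Real.sqrt n := Real.sqrt_nonneg n
    have hrn1 : (1 : ℝ) ≤ Real.sqrt n := by
      have := Real.sqrt_le_sqrt (show (1:ℝ) ≤ n by linarith)
      rwa [Real.sqrt_one] at this
    have hsq : Real.sqrt n * Real.sqrt n = n := Real.mul_self_sqrt hn0.le
    have hun : (0 : ℝ) ≤ Real.sqrt (n + 1) := Real.sqrt_nonneg _
    have hu2 : Real.sqrt (n + 1) * Real.sqrt (n + 1) = n + 1 :=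
      Real.mul_self_sqrt (by linarith)
    have hsn : Real.sqrt n ≤ Real.sqrt (n + 1) := Real.sqrt_le_sqrt (by linarith)
    have hgoal : h (s + 1) ≤ B / (n + 1) := by
      by_cases hcase : Real.sqrt (n + 1) ≤ 3 * M / (γ ^ 2 * μ)
      · have hsl := hslow (s + 1) (by omega)
        push_cast at hsl
        rw [← hn_def] at hsl
        have h2 : 3 * M / Real.sqrt (n + 1) ≤ B / (n + 1) := by
          have hup : (0 : ℝ) < Real.sqrt (n + 1) := Real.sqrt_pos.mpr (by linarith)
          rw [le_div_iff₀ hγμ] at hcase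
          have h3M : 3 * M * Real.sqrt (n + 1) ≤ B := by
            rw [hB_def, le_div_iff₀ hγμ]
            nlinarith [mul_le_mul_of_nonneg_left hcase (show (0:ℝ) ≤ 3 * M by positivity)]
          rw [div_le_div_iff₀ hup (by linarith)]
          have h4 := mul_le_mul_of_nonneg_right h3M hup.le
          rw [mul_assoc, hu2] at h4
          linarith
        linarith
      · push_neg at hcase
        have hBlt : B ≤ 3 * M * Real.sqrt (n + 1) := by
          rw [div_lt_iff₀ hγμ] at hcase
          nlinarith [hBγμ, hγμ, mul_lt_mul_of_pos_left hcase (show (0:ℝ) < 3 * M by positivity)]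
        have hnoise : C1 / (n * Real.sqrt n) + C2 / n ^ 2 ≤ M / (n * Real.sqrt n) := by
          have hns : (0:ℝ) < n * Real.sqrt n := by positivity
          have hns2 : n * Real.sqrt n ≤ n ^ 2 := by nlinarith
          have e2 : C2 / n ^ 2 ≤ C2 / (n * Real.sqrt n) :=
            div_le_div_of_nonneg_left hC2 hns hns2
          have e3 : C1 / (n * Real.sqrt n) + C2 / (n * Real.sqrt n)
              = (C1 + C2) / (n * Real.sqrt n) := by ring
          have e4 : (C1 + C2) / (n * Real.sqrt n) ≤ M / (n * Real.sqrt n) := by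
            rw [div_le_div_iff_of_pos_right hns]
            rw [hM_def]; nlinarith
          linarith
        have hpow : n ^ ((3 : ℝ) / 2) = n * Real.sqrt n := by
          rw [show (3 : ℝ) / 2 = 1 + 1 / 2 by norm_num, Real.rpow_add hn0, Real.rpow_one,
            ← Real.sqrt_eq_rpow]
        rcases le_or_gt (Real.sqrt (h s)) (γ * Real.sqrt (2 * μ) / n) with hsm | hbg
        · have hr := hrec2 s hs (by rw [hn_def] at hsm; exact hsm)
          rw [← hn_def, hpow] at hr
          clear hpow
          have hfin : M / (n * Real.sqrt n) ≤ B / (n + 1) := by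
            rw [div_le_div_iff₀ (by positivity) (by linarith)]
            nlinarith [hB9, hM0.le, mul_le_mul_of_nonneg_left hrn1 (mul_nonneg hM0.le hn0.le),
              mul_le_mul_of_nonneg_right hB9 (mul_nonneg hn0.le hrn)]
          linarith
        · have hr := hrec1 s hs (by rw [hn_def] at hbg; exact hbg)
          rw [← hn_def, hpow] at hr
          clear hpow
          have hhs0 := hpos s
          have hIH : h s ≤ B / n := IH
          have hmono := fw_mono (γ * Real.sqrt (2 * μ) / n) (h s) (B / n) hhs0 hbg.le hIH
          have hsμ : (0 : ℝ) < Real.sqrt μ := Real.sqrt_pos.mpr hμ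
          have hsqB : Real.sqrt B = 3 * M / (γ * Real.sqrt μ) := by
            rw [show B = (3 * M / (γ * Real.sqrt μ)) ^ 2 by
              rw [hB_def, div_pow, mul_pow, mul_pow, Real.sq_sqrt hμ.le]; ring,
              Real.sqrt_sq (by positivity)]
          have hsqBn : Real.sqrt (B / n) = Real.sqrt B / Real.sqrt n :=
            Real.sqrt_div hB0.le n
          have h2μ : Real.sqrt (2 * μ) = Real.sqrt 2 * Real.sqrt μ :=
            Real.sqrt_mul (by norm_num) μ
          have hsrn : Real.sqrt n ≠ 0 := by positivity
          have hdrop : γ * Real.sqrt (2 * μ) / n * Real.sqrt (B / n)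
              = 3 * Real.sqrt 2 * M / (n * Real.sqrt n) := by
            rw [hsqBn, hsqB, h2μ]
            field_simp
          have hs2 : (4 : ℝ) / 3 ≤ Real.sqrt 2 := by
            nlinarith [Real.sq_sqrt (show (0:ℝ) ≤ 2 by norm_num), Real.sqrt_nonneg 2]
          have hkey : B / n - B / (n + 1) ≤ (3 * Real.sqrt 2 - 1) * M / (n * Real.sqrt n) := by
            have heq : B / n - B / (n + 1) = B / (n * (n + 1)) := by
              field_simp
              ring
            rw [heq, div_le_div_iff₀ (by positivity) (by positivity)]
            have c1 : Real.sqrt (n + 1) * Real.sqrt n ≤ n + 1 := by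
              calc Real.sqrt (n + 1) * Real.sqrt n ≤ Real.sqrt (n + 1) * Real.sqrt (n + 1) :=
                    mul_le_mul_of_nonneg_left hsn hun
                _ = n + 1 := hu2
            have c2 : B * (n * Real.sqrt n) ≤ 3 * M * Real.sqrt (n + 1) * (n * Real.sqrt n) :=
              mul_le_mul_of_nonneg_right hBlt (by positivity)
            have c3 : 3 * M * Real.sqrt (n + 1) * (n * Real.sqrt n)
                = 3 * M * n * (Real.sqrt (n + 1) * Real.sqrt n) := by ring
            have c4 : 3 * M * n * (Real.sqrt (n + 1) * Real.sqrt n) ≤ 3 * M * n * (n + 1) :=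
              mul_le_mul_of_nonneg_left c1 (by positivity)
            have c5 : 3 * M * n * (n + 1) ≤ (3 * Real.sqrt 2 - 1) * M * (n * (n + 1)) := by
              have c6 := mul_le_mul_of_nonneg_right
                (show (3:ℝ) ≤ 3 * Real.sqrt 2 - 1 by linarith)
                (show (0:ℝ) ≤ M * (n * (n + 1)) by positivity)
              linarith [c6]
            linarith [c2, c3, c4, c5]
          have hdiff : (3 * Real.sqrt 2 - 1) * M / (n * Real.sqrt n)
              = 3 * Real.sqrt 2 * M / (n * Real.sqrt n) - M / (n * Real.sqrt n) := by
            ring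
          linarith [hr, hmono, hnoise]
    exact hgoal
end

section
/- Suppose a nonnegative sequence h_t satisfies h_1 ≤ βD²/2 and h_{t+1} ≤ (1 − 1/(t+1)) h_t + βD²/(2(t+1)²) + A/(t+1)^{3/2} for all t ≥ 1, where A, β, D > 0. Then h_t ≤ 3(βD² + A)/√(t+1) for all t ≥ 1. -/
set_option maxHeartbeats 1000000


theorem l1_fw_induction (h : ℕ → ℝ) (A β D : ℝ) (hA : 0 < A) (hβ : 0 < β) (hD : 0 < D)
    (hpos : ∀ t, 0 ≤ h t)
    (h1 : h 1 ≤ β * D ^ 2 / 2)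
    (hrec : ∀ t ≥ 1, h (t + 1) ≤ (1 - 1 / ((t : ℝ) + 1)) * h t
      + β * D ^ 2 / (2 * ((t : ℝ) + 1) ^ 2) + A / ((t : ℝ) + 1) ^ ((3 : ℝ) / 2)) :
    ∀ t ≥ 1, h t ≤ 3 * (β * D ^ 2 + A) / Real.sqrt ((t : ℝ) + 1) := by
  set C := 3 * (β * D ^ 2 + A) with hC
  have hCpos : 0 < C := by positivity
  intro t ht
  induction t with
  | zero => omega
  | succ n ih =>
    rcases Nat.lt_or_ge n 1 with hn | hn
    · -- base case n = 0, t = 1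
      interval_cases n
      have hs0 : (0 : ℝ) < Real.sqrt 2 := Real.sqrt_pos.mpr (by norm_num)
      have hs2 : Real.sqrt 2 ≤ 2 := by
        nlinarith [Real.sq_sqrt (by norm_num : (0:ℝ) ≤ 2), Real.sqrt_nonneg 2]
      have h2 : C / 2 ≤ C / Real.sqrt 2 :=
        div_le_div_of_nonneg_left hCpos.le hs0 hs2
      have : ((1 : ℕ) : ℝ) + 1 = 2 := by norm_num
      rw [this]
      have : β * D ^ 2 / 2 ≤ C / 2 := by
        rw [hC]; nlinarith
      linarith
    · -- inductive step, n ≥ 1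
      have ihv := ih hn
      set a := Real.sqrt ((n : ℝ) + 1) with ha
      set b := Real.sqrt (((n : ℕ) + 1 : ℕ) + 1 : ℝ) with hb
      have hn1 : (0:ℝ) ≤ (n:ℝ) + 1 := by positivity
      have ha2 : a ^ 2 = (n : ℝ) + 1 := Real.sq_sqrt hn1
      have hb2 : b ^ 2 = (n : ℝ) + 2 := by
        rw [hb]; push_cast
        rw [Real.sq_sqrt (by positivity)]; ring
      have ha_pos : 0 < a := Real.sqrt_pos.mpr (by positivity)
      have hb_pos : 0 < b := Real.sqrt_pos.mpr (by positivity)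
      have hn' : (1:ℝ) ≤ (n:ℝ) := by exact_mod_cast hn
      have ha1 : 1 ≤ a := by nlinarith
      have hab : a ≤ b := by nlinarith
      -- rewrite the recurrence
      have hr := hrec n hn
      have hrpow : ((n : ℝ) + 1) ^ ((3 : ℝ) / 2) = ((n : ℝ) + 1) * a := by
        rw [show (3:ℝ)/2 = 1 + 1/2 by norm_num, Real.rpow_add (by positivity),
          Real.rpow_one, ha, Real.sqrt_eq_rpow]
      rw [hrpow] at hr
      -- use induction hypothesis
      have hcoef : (0:ℝ) ≤ 1 - 1 / ((n:ℝ) + 1) := by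
        have : 1 / ((n:ℝ) + 1) ≤ 1 := by
          rw [div_le_one (by positivity)]; linarith
        linarith
      have step1 : h (n + 1) ≤ (1 - 1 / ((n:ℝ) + 1)) * (C / a)
          + β * D ^ 2 / (2 * ((n:ℝ) + 1) ^ 2) + A / (((n:ℝ) + 1) * a) := by
        have := mul_le_mul_of_nonneg_left ihv hcoef
        linarith
      -- bound b from above: 2ab ≤ 2a² + 1
      have hbsub : (b - a) * (b + a) = 1 := by
        rw [show (b - a) * (b + a) = b ^ 2 - a ^ 2 by ring, hb2, ha2]; ring
      have hb2ab : 2 * a * b ≤ 2 * a ^ 2 + 1 := by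
        nlinarith [hbsub, sq_nonneg (b - a)]
      -- the key algebraic inequality
      have main : (1 - 1 / ((n:ℝ) + 1)) * (C / a)
          + β * D ^ 2 / (2 * ((n:ℝ) + 1) ^ 2) + A / (((n:ℝ) + 1) * a) ≤ C / b := by
        have hLeq : (1 - 1 / ((n:ℝ) + 1)) * (C / a)
            + β * D ^ 2 / (2 * ((n:ℝ) + 1) ^ 2) + A / (((n:ℝ) + 1) * a)
            = (C * a ^ 3 - C * a + β * D ^ 2 / 2 + A * a) / a ^ 4 := by
          rw [← ha2]; field_simp
        rw [hLeq, div_le_div_iff₀ (by positivity) hb_pos]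
        clear hr step1 ihv ih hrec hpos h1 hLeq
        nlinarith [mul_le_mul_of_nonneg_right hb2ab (by positivity : (0:ℝ) ≤ C * a ^ 2 / 2),
          mul_le_mul_of_nonneg_left hab (by positivity : (0:ℝ) ≤ β * D ^ 2 * a),
          mul_le_mul_of_nonneg_left hab (by positivity : (0:ℝ) ≤ A * a),
          mul_le_mul_of_nonneg_right ha1 (by positivity : (0:ℝ) ≤ β * D ^ 2 * b),
          mul_pos (mul_pos hβ (pow_pos hD 2)) (mul_pos ha_pos hb_pos),
          mul_pos hA (mul_pos ha_pos hb_pos)]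
      exact step1.trans main
end
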